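/- Asymptotic decay of the Vandermonde simplex radius (decay part of Lemma 2). Let n ≥ 1, λ₁, …, λ_n < 0 be real numbers, c₀, …, c_{n−1} ∈ ℝ determined by ∏_{k=1}^n (X − λ_k) = X^n + Σ_{k=0}^{n−1} c_k X^k, let λ' be the list λ₁, …, λ_n with one occurrence of a maximal element removed, and c'₀, …, c'_{n−1} determined by ∏_{λ ∈ λ'} (X − λ) = Σ_{k=0}^{n−1} c'_k X^k. Let g ∈ ℝ^d and let x : ℝ → ℝ^d be an n-times continuously differentiable function satisfying x^{(n)}(t) = −Σ_{k=1}^{n−1} c_k·x^{(k)}(t) − c₀·(x(t) − g) for all t ≥ 0. Then the Vandermonde simplex radius max_{0 ≤ m ≤ n−1} ‖g − Σ_{k=0}^m (c'_k/c'_0)·x^{(k)}(t)‖ tends to 0 as t → ∞. -/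

import Mathlib

open Polynomial

open Filter Real


local notation "⟪" x ", " y "⟫" => @inner ℝ _ _ x y

lemma tendsto_zero_of_linear_ode {E : Type*} [NormedAddCommGroup E] [InnerProductSpace ℝ E]
    {u f : ℝ → E} {l : ℝ} (hl : l < 0)
    (hu : ∀ t, HasDerivAt u (l • u t + f t) t)
    (hf : Filter.Tendsto f Filter.atTop (nhds 0)) :
    Filter.Tendsto u Filter.atTop (nhds 0) := by
  rw [NormedAddCommGroup.tendsto_nhds_zero]
  intro ε hε
  set b : ℝ := (-l) * ε / 2 with hbdef
  have hb0 : 0 < b := div_pos (mul_pos (neg_pos.mpr hl) hε) two_pos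
  obtain ⟨T, hT⟩ : ∃ T : ℝ, ∀ t ≥ T, ‖f t‖ ≤ b := by
    have := (NormedAddCommGroup.tendsto_nhds_zero.mp hf b hb0)
    rw [Filter.eventually_atTop] at this
    obtain ⟨T, hT⟩ := this
    exact ⟨T, fun t ht => (hT t ht).le⟩
  set σ : ℝ → ℝ := fun t => ⟪u t, u t⟫ - b ^ 2 / l ^ 2 with hσdef
  have hσ : ∀ t, HasDerivAt σ (⟪u t, l • u t + f t⟫ + ⟪l • u t + f t, u t⟫) t := by
    intro t
    exact (HasDerivAt.inner ℝ (hu t) (hu t)).sub_const _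
  set φ : ℝ → ℝ := fun t => Real.exp (-l * t) * σ t with hφdef
  have hφ : ∀ t, HasDerivAt φ
      (Real.exp (-l * t) * (-l) * σ t +
        Real.exp (-l * t) * (⟪u t, l • u t + f t⟫ + ⟪l • u t + f t, u t⟫)) t := by
    intro t
    have h1 : HasDerivAt (fun t : ℝ => Real.exp (-l * t)) (Real.exp (-l * t) * (-l)) t := by
      simpa using ((hasDerivAt_id t).const_mul (-l)).exp
    exact h1.mul (hσ t)
  have hmono : AntitoneOn φ (Set.Ici T) := by
    apply antitoneOn_of_deriv_nonpos (convex_Ici T)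
    · have hdiff : Differentiable ℝ φ := fun t => (hφ t).differentiableAt
      exact hdiff.continuous.continuousOn
    · intro t _
      exact ((hφ t).differentiableAt).differentiableWithinAt
    · intro t ht
      rw [interior_Ici] at ht
      rw [(hφ t).deriv]
      have hft : ‖f t‖ ≤ b := hT t ht.le
      have hinner : ⟪u t, f t⟫ ≤ ‖u t‖ * ‖f t‖ := real_inner_le_norm _ _
      have hun : (0:ℝ) ≤ ‖u t‖ := norm_nonneg _
      have hself : ⟪u t, u t⟫ = ‖u t‖ ^ 2 := real_inner_self_eq_norm_sq _
      have hcomm : ⟪f t, u t⟫ = ⟪u t, f t⟫ := real_inner_comm _ _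
      have hexp : (0:ℝ) < Real.exp (-l * t) := Real.exp_pos _
      have key : (-l) * σ t + (⟪u t, l • u t + f t⟫ + ⟪l • u t + f t, u t⟫) ≤ 0 := by
        simp only [inner_add_left, inner_add_right, real_inner_smul_left, real_inner_smul_right,
          hσdef]
        rw [hself] at *
        have hsq : 0 ≤ (l * ‖u t‖ + b) ^ 2 := sq_nonneg _
        have hl2 : 0 < l ^ 2 := by nlinarith
        have h2 : ⟪u t, f t⟫ ≤ ‖u t‖ * b := hinner.trans (by nlinarith)
        rw [hcomm]
        have hb2 : b ^ 2 / l ^ 2 * l ^ 2 = b ^ 2 := div_mul_cancel₀ _ hl2.ne'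
        nlinarith [mul_le_mul_of_nonneg_left h2 (le_of_lt (neg_pos.mpr hl))]
      calc Real.exp (-l * t) * (-l) * σ t +
            Real.exp (-l * t) * (⟪u t, l • u t + f t⟫ + ⟪l • u t + f t, u t⟫)
          = Real.exp (-l * t) * ((-l) * σ t + (⟪u t, l • u t + f t⟫ + ⟪l • u t + f t, u t⟫)) := by
            ring
        _ ≤ 0 := mul_nonpos_of_nonneg_of_nonpos hexp.le key
  have hdecexp : Filter.Tendsto (fun t : ℝ => Real.exp (l * t) * (Real.exp (-l * T) * σ T))
      Filter.atTop (nhds 0) := by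
    have h1 : Filter.Tendsto (fun t : ℝ => l * t) Filter.atTop Filter.atBot := by
      exact Filter.Tendsto.const_mul_atTop_of_neg hl Filter.tendsto_id
    simpa using ((Real.tendsto_exp_atBot.comp h1).mul_const (Real.exp (-l * T) * σ T))
  have hsmall : ∀ᶠ t in Filter.atTop,
      Real.exp (l * t) * (Real.exp (-l * T) * σ T) < ε ^ 2 / 4 := by
    have h4 : (0:ℝ) < ε ^ 2 / 4 := by positivity
    exact hdecexp.eventually_lt_const h4
  filter_upwards [hsmall, Filter.eventually_ge_atTop T] with t hts htT
  have hφle : φ t ≤ φ T := hmono (Set.self_mem_Ici) htT htT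
  have hexp0 : (0:ℝ) < Real.exp (l * t) := Real.exp_pos _
  have hσt : σ t ≤ Real.exp (l * t) * (Real.exp (-l * T) * σ T) := by
    have h2 := mul_le_mul_of_nonneg_left hφle hexp0.le
    calc σ t = Real.exp (l * t) * (Real.exp (-l * t) * σ t) := by
          rw [← mul_assoc, ← Real.exp_add]; simp
      _ ≤ Real.exp (l * t) * (Real.exp (-l * T) * σ T) := h2
  have hself : ⟪u t, u t⟫ = ‖u t‖ ^ 2 := real_inner_self_eq_norm_sq _
  have hnorm2 : ‖u t‖ ^ 2 < ε ^ 2 / 4 + b ^ 2 / l ^ 2 := by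
    have : σ t < ε ^ 2 / 4 := lt_of_le_of_lt hσt hts
    simp only [hσdef, hself] at this
    linarith
  have hb2 : b ^ 2 / l ^ 2 = ε ^ 2 / 4 := by
    have hl2 : (0:ℝ) < l ^ 2 := by nlinarith
    rw [hbdef, div_eq_iff hl2.ne']; ring
  have : ‖u t‖ ^ 2 < ε ^ 2 / 2 := by rw [hb2] at hnorm2; linarith
  nlinarith [norm_nonneg (u t), hε]

lemma decay_list {E : Type*} [NormedAddCommGroup E] [InnerProductSpace ℝ E] :
    ∀ L : List ℝ, (∀ l ∈ L, l < 0) → ∀ u : ℝ → E,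
      ContDiff ℝ (L.length : ℕ∞) u →
      (∀ t : ℝ, 0 ≤ t →
        ∑ k ∈ Finset.range (L.length + 1),
          ((L.map (fun r => X - C r)).prod.coeff k) • iteratedDeriv k u t = 0) →
      ∀ k ≤ L.length, Filter.Tendsto (iteratedDeriv k u) Filter.atTop (nhds 0) := by
  intro L
  induction L with
  | nil =>
    intro _ u _ hode k hk
    obtain rfl : k = 0 := Nat.le_zero.mp hk
    have h0 : ∀ t : ℝ, 0 ≤ t → u t = 0 := by
      intro t ht
      have := hode t ht
      simpa using this
    rw [iteratedDeriv_zero]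
    apply Filter.Tendsto.congr' _ (tendsto_const_nhds (x := (0:E)))
    filter_upwards [Filter.eventually_ge_atTop (0:ℝ)] with t ht
    exact (h0 t ht).symm
  | cons a L ih =>
    intro hneg u hu hode
    set m := L.length with hm
    set q : Polynomial ℝ := (L.map (fun r => X - C r)).prod with hq
    -- basic facts
    have hqdeg : q.natDegree ≤ m := by
      refine le_trans (Polynomial.natDegree_list_prod_le _) ?_
      rw [List.map_map]
      have : ∀ r ∈ L, (Polynomial.natDegree ∘ fun r : ℝ => X - C r) r ≤ 1 := by
        intro r _
        simp [Polynomial.natDegree_X_sub_C]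
      calc ((L.map (Polynomial.natDegree ∘ fun r : ℝ => X - C r)).sum)
          ≤ (L.map (fun _ => 1)).sum := List.sum_le_sum (by simpa using this)
        _ = m := by simp [hm]
    have hqtop : q.coeff (m + 1) = 0 :=
      Polynomial.coeff_eq_zero_of_natDegree_lt (lt_of_le_of_lt hqdeg (Nat.lt_succ_self m))
    have hu' : ContDiff ℝ ((m : WithTop ℕ∞) + 1) u := by
      have : ((((a :: L).length : ℕ) : ℕ∞) : WithTop ℕ∞) = (m : WithTop ℕ∞) + 1 := by
        simp [hm]
      rw [← this]
      exact_mod_cast hu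
    have hud : Differentiable ℝ u :=
      hu'.differentiable (by simp)
    have hdu : ContDiff ℝ (m : WithTop ℕ∞) (deriv u) :=
      (contDiff_succ_iff_deriv.mp hu').2.2
    have hum : ContDiff ℝ (m : WithTop ℕ∞) u := hu'.of_le (by exact_mod_cast le_self_add)
    set v : ℝ → E := fun t => deriv u t - a • u t with hv
    have hvc : ContDiff ℝ (m : WithTop ℕ∞) v := hdu.sub (hum.const_smul a)
    -- iterated derivatives of v
    have hvd : ∀ k, k ≤ m → ∀ t, iteratedDeriv k v t
        = iteratedDeriv (k + 1) u t - a • iteratedDeriv k u t := by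
      intro k hk t
      have hkle : ((k : ℕ) : WithTop ℕ∞) ≤ (m : WithTop ℕ∞) := by exact_mod_cast hk
      have h1 : iteratedDeriv k v t
          = iteratedDeriv k (deriv u) t - a • iteratedDeriv k u t := by
        simp only [← iteratedDerivWithin_univ]
        have hfC : ContDiffOn ℝ k (deriv u) Set.univ := (hdu.of_le hkle).contDiffOn
        have hgC : ContDiffOn ℝ k (a • u) Set.univ := ((hum.of_le hkle).const_smul a).contDiffOn
        have : iteratedDerivWithin k (deriv u - a • u) Set.univ t
            = iteratedDerivWithin k (deriv u) Set.univ t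
              - iteratedDerivWithin k (a • u) Set.univ t :=
          iteratedDerivWithin_sub (Set.mem_univ t) uniqueDiffOn_univ (hfC t (Set.mem_univ t)) (hgC t (Set.mem_univ t))
        rw [show v = deriv u - a • u from rfl, this,
          iteratedDerivWithin_const_smul (Set.mem_univ t) uniqueDiffOn_univ a
            ((hum.of_le hkle).contDiffOn t (Set.mem_univ t))]
      rw [h1, ← iteratedDeriv_succ']
    -- the ODE for v
    have hodev : ∀ t : ℝ, 0 ≤ t →
        ∑ k ∈ Finset.range (m + 1), (q.coeff k) • iteratedDeriv k v t = 0 := by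
      intro t ht
      have hODE := hode t ht
      have hprod : ((a :: L).map (fun r => X - C r)).prod = (X - C a) * q := by
        simp [hq]
      rw [hprod] at hODE
      have hco : ∀ k, ((X - C a) * q).coeff k = (X * q).coeff k - a * q.coeff k := by
        intro k
        rw [sub_mul, Polynomial.coeff_sub, Polynomial.coeff_C_mul]
      simp only [List.length_cons, ← hm] at hODE
      rw [show m + 1 + 1 = (m + 1) + 1 from rfl] at hODE
      set w : ℕ → E := fun k => iteratedDeriv k u t with hw
      have e1 : ∑ k ∈ Finset.range (m + 1 + 1), ((X - C a) * q).coeff k • w k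
          = ∑ k ∈ Finset.range (m + 1 + 1), ((X * q).coeff k • w k)
            - ∑ k ∈ Finset.range (m + 1 + 1), ((a * q.coeff k) • w k) := by
        rw [← Finset.sum_sub_distrib]
        exact Finset.sum_congr rfl fun k _ => by rw [hco k, sub_smul]
      have e2 : ∑ k ∈ Finset.range (m + 1 + 1), ((X * q).coeff k • w k)
          = ∑ k ∈ Finset.range (m + 1), (q.coeff k • w (k + 1)) := by
        rw [Finset.sum_range_succ']
        simp [Polynomial.coeff_X_mul, Polynomial.mul_coeff_zero, Polynomial.coeff_X_zero]
      have e3 : ∑ k ∈ Finset.range (m + 1 + 1), ((a * q.coeff k) • w k)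
          = ∑ k ∈ Finset.range (m + 1), ((a * q.coeff k) • w k) := by
        rw [Finset.sum_range_succ, hqtop]
        simp
      rw [e1, e2, e3] at hODE
      calc ∑ k ∈ Finset.range (m + 1), (q.coeff k) • iteratedDeriv k v t
          = ∑ k ∈ Finset.range (m + 1),
              ((q.coeff k • w (k + 1)) - (a * q.coeff k) • w k) := by
            refine Finset.sum_congr rfl fun k hk => ?_
            rw [hvd k (Nat.lt_succ_iff.mp (Finset.mem_range.mp hk)) t, smul_sub,
              smul_smul, mul_comm]
        _ = 0 := by rw [Finset.sum_sub_distrib, hODE]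
    have hnegL : ∀ l ∈ L, l < 0 := fun l hl => hneg l (List.mem_cons_of_mem a hl)
    have ihv := ih hnegL v (by exact_mod_cast hvc) hodev
    -- u itself tends to 0
    have hu0 : Filter.Tendsto u Filter.atTop (nhds 0) := by
      have ha : a < 0 := hneg a List.mem_cons_self
      have hder : ∀ t, HasDerivAt u (a • u t + v t) t := by
        intro t
        have h1 := (hud t).hasDerivAt
        have : a • u t + v t = deriv u t := by simp [hv]
        rw [this]
        exact h1
      have hv0 : Filter.Tendsto v Filter.atTop (nhds 0) := by
        have := ihv 0 (Nat.zero_le m)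
        rwa [iteratedDeriv_zero] at this
      exact tendsto_zero_of_linear_ode ha hder hv0
    -- induct on k
    intro k hk
    simp only [List.length_cons, ← hm] at hk
    induction k with
    | zero => rwa [iteratedDeriv_zero]
    | succ k ihk =>
      have hkm : k ≤ m := Nat.lt_succ_iff.mp hk
      have hprev : Filter.Tendsto (iteratedDeriv k u) Filter.atTop (nhds 0) :=
        ihk (le_of_lt hk)
      have heq : iteratedDeriv (k + 1) u
          = fun t => iteratedDeriv k v t + a • iteratedDeriv k u t := by
        funext t
        rw [hvd k hkm t]
        abel
      rw [heq]
      have := (ihv k hkm).add (hprev.const_smul a)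
      simpa using this


/-- Asymptotic decay of the Vandermonde simplex radius (decay part of Lemma 2):
along the PhD closed-loop trajectory, the Vandermonde simplex radius
`max_m ‖g − Σ_{k=0}^m (c'_k/c'_0)·x⁽ᵏ⁾(t)‖` tends to zero. -/
theorem vandermonde_simplex_radius_decay {d n : ℕ} (hn : 1 ≤ n)
    (lam : Fin n → ℝ) (hlam : ∀ k, lam k < 0)
    (c c' : ℕ → ℝ)
    (hc : ∏ k : Fin n, (X - C (lam k)) =
      X ^ n + ∑ k ∈ Finset.range n, C (c k) * X ^ k)
    (j : Fin n) (hj : ∀ k, lam k ≤ lam j)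
    (hc' : ∏ k ∈ Finset.univ.erase j, (X - C (lam k)) =
      ∑ k ∈ Finset.range n, C (c' k) * X ^ k)
    (g : EuclideanSpace ℝ (Fin d)) (x : ℝ → EuclideanSpace ℝ (Fin d))
    (hx : ContDiff ℝ (n : ℕ∞) x)
    (hode : ∀ t : ℝ, 0 ≤ t →
      iteratedDeriv n x t =
        -(∑ k ∈ Finset.Ico 1 n, c k • iteratedDeriv k x t) - c 0 • (x t - g)) :
    Filter.Tendsto (fun t : ℝ => ⨆ m : Fin n,
        ‖g - ∑ k ∈ Finset.range ((m : ℕ) + 1), (c' k / c' 0) • iteratedDeriv k x t‖)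
      Filter.atTop (nhds 0) := by
  classical
  have hn0 : 0 < n := hn
  set u : ℝ → EuclideanSpace ℝ (Fin d) := fun t => x t - g with hudef
  have huC : ContDiff ℝ (n : ℕ∞) u := hx.sub contDiff_const
  have hitd : ∀ k, 1 ≤ k → iteratedDeriv k u = iteratedDeriv k x := by
    intro k hk
    cases k with
    | zero => omega
    | succ k =>
      rw [iteratedDeriv_succ', iteratedDeriv_succ']
      have hdd : deriv u = deriv x := funext fun s => deriv_sub_const (𝕜 := ℝ) g
      rw [hdd]
  set L : List ℝ := List.ofFn lam with hL
  have hlen : L.length = n := List.length_ofFn (f := lam)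
  have hLprod : (L.map (fun r => X - C r)).prod = ∏ k : Fin n, (X - C (lam k)) := by
    rw [hL, List.map_ofFn]
    exact List.prod_ofFn
  have hpc : ∀ k, k < n → (∏ k : Fin n, (X - C (lam k))).coeff k = c k := by
    intro k hk
    rw [hc, Polynomial.coeff_add, Polynomial.coeff_X_pow,
      Polynomial.finset_sum_coeff]
    have h1 : ∀ i ∈ Finset.range n, (C (c i) * X ^ i).coeff k
        = if k = i then c i else 0 := by
      intro i _
      rw [Polynomial.coeff_C_mul, Polynomial.coeff_X_pow]
      split <;> simp
    rw [Finset.sum_congr rfl h1]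
    have h2 : ∑ i ∈ Finset.range n, (if k = i then c i else 0) = c k := by
      rw [Finset.sum_ite_eq (Finset.range n) k c, if_pos (Finset.mem_range.mpr hk)]
    rw [h2, if_neg (Nat.ne_of_lt hk)]
    ring
  have hpn : (∏ k : Fin n, (X - C (lam k))).coeff n = 1 := by
    rw [hc, Polynomial.coeff_add, Polynomial.coeff_X_pow,
      Polynomial.finset_sum_coeff]
    have h1 : ∀ i ∈ Finset.range n, (C (c i) * X ^ i).coeff n = 0 := by
      intro i hi
      rw [Polynomial.coeff_C_mul, Polynomial.coeff_X_pow,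
        if_neg (Nat.ne_of_gt (Finset.mem_range.mp hi))]
      ring
    rw [Finset.sum_congr rfl h1]
    simp
  have hodeu : ∀ t : ℝ, 0 ≤ t →
      ∑ k ∈ Finset.range (n + 1),
        ((∏ k : Fin n, (X - C (lam k))).coeff k) • iteratedDeriv k u t = 0 := by
    intro t ht
    rw [Finset.sum_range_succ, hpn, one_smul, hitd n hn]
    have hsplit : ∑ k ∈ Finset.range n,
        ((∏ k : Fin n, (X - C (lam k))).coeff k) • iteratedDeriv k u t
        = c 0 • (x t - g) + ∑ k ∈ Finset.Ico 1 n, c k • iteratedDeriv k x t := by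
      rw [Finset.range_eq_Ico, Finset.sum_eq_sum_Ico_succ_bot hn0]
      congr 1
      · rw [hpc 0 hn0]
        simp [hudef]
      · refine Finset.sum_congr rfl fun k hk => ?_
        obtain ⟨h1, h2⟩ := Finset.mem_Ico.mp hk
        rw [hpc k h2, hitd k h1]
    rw [hsplit, hode t ht]
    abel
  have hdec : ∀ k ≤ n, Filter.Tendsto (iteratedDeriv k u) Filter.atTop (nhds 0) := by
    have hnegL : ∀ l ∈ L, l < 0 := by
      intro l hl
      rw [hL, List.mem_ofFn] at hl
      obtain ⟨i, rfl⟩ := hl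
      exact hlam i
    have huC' : ContDiff ℝ (L.length : ℕ∞) u := by rw [hlen]; exact huC
    have hode' : ∀ t : ℝ, 0 ≤ t →
        ∑ k ∈ Finset.range (L.length + 1),
          ((L.map (fun r => X - C r)).prod.coeff k) • iteratedDeriv k u t = 0 := by
      simp only [hlen, hLprod]
      exact hodeu
    have := decay_list L hnegL u huC' hode'
    rwa [hlen] at this
  have hxg : Filter.Tendsto x Filter.atTop (nhds g) := by
    have h0 := hdec 0 (Nat.zero_le n)
    rw [iteratedDeriv_zero] at h0
    have h2 : Filter.Tendsto (fun t => u t + g) Filter.atTop (nhds (0 + g)) :=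
      h0.add_const g
    simpa [hudef] using h2
  have hxk : ∀ k, 1 ≤ k → k ≤ n →
      Filter.Tendsto (iteratedDeriv k x) Filter.atTop (nhds 0) := by
    intro k h1 h2
    have := hdec k h2
    rwa [hitd k h1] at this
  have hc'0 : 0 < c' 0 := by
    have h0 := congrArg (fun P : Polynomial ℝ => P.coeff 0) hc'
    have hLc : (∏ k ∈ Finset.univ.erase j, (X - C (lam k))).coeff 0
        = ∏ k ∈ Finset.univ.erase j, (-lam k) := by
      rw [Polynomial.coeff_zero_eq_eval_zero, Polynomial.eval_prod]
      simp
    have hRc : (∑ k ∈ Finset.range n, C (c' k) * X ^ k).coeff 0 = c' 0 := by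
      rw [Polynomial.finset_sum_coeff]
      have h1 : ∀ i ∈ Finset.range n, (C (c' i) * X ^ i).coeff 0
          = if 0 = i then c' i else 0 := by
        intro i _
        rw [Polynomial.coeff_C_mul, Polynomial.coeff_X_pow]
        split <;> simp
      rw [Finset.sum_congr rfl h1, Finset.sum_ite_eq (Finset.range n) 0 c',
        if_pos (Finset.mem_range.mpr hn0)]
    rw [hLc, hRc] at h0
    rw [← h0]
    exact Finset.prod_pos fun k _ => by linarith [hlam k]
  have hym : ∀ m : Fin n, Filter.Tendsto (fun t : ℝ =>
      g - ∑ k ∈ Finset.range ((m : ℕ) + 1), (c' k / c' 0) • iteratedDeriv k x t)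
      Filter.atTop (nhds 0) := by
    intro m
    have hsum : Filter.Tendsto (fun t : ℝ =>
        ∑ k ∈ Finset.range ((m : ℕ) + 1), (c' k / c' 0) • iteratedDeriv k x t)
        Filter.atTop (nhds g) := by
      have heq : (fun t : ℝ =>
          ∑ k ∈ Finset.range ((m : ℕ) + 1), (c' k / c' 0) • iteratedDeriv k x t)
          = fun t : ℝ =>
            (∑ k ∈ Finset.range (m : ℕ), (c' (k + 1) / c' 0) • iteratedDeriv (k + 1) x t)
              + (c' 0 / c' 0) • x t := by
        funext t
        rw [Finset.sum_range_succ' (fun k => (c' k / c' 0) • iteratedDeriv k x t) (m : ℕ)]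
        rw [iteratedDeriv_zero]
      rw [heq]
      have h1 : Filter.Tendsto (fun t : ℝ =>
          ∑ k ∈ Finset.range (m : ℕ), (c' (k + 1) / c' 0) • iteratedDeriv (k + 1) x t)
          Filter.atTop (nhds 0) := by
        have := tendsto_finset_sum (Finset.range (m : ℕ))
          (fun k (hk : k ∈ Finset.range (m : ℕ)) => by
            have hkm : k + 1 ≤ n := by
              have := Finset.mem_range.mp hk
              omega
            exact Filter.Tendsto.const_smul (hxk (k + 1) (Nat.le_add_left 1 k) hkm)
              (c' (k + 1) / c' 0))
        simpa using this
      have h2 : Filter.Tendsto (fun t : ℝ => (c' 0 / c' 0) • x t)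
          Filter.atTop (nhds g) := by
        simp only [div_self hc'0.ne', one_smul]
        exact hxg
      simpa using h1.add h2
    have := tendsto_const_nhds (x := g) (f := Filter.atTop (α := ℝ)) |>.sub hsum
    simpa using this
  haveI : Nonempty (Fin n) := ⟨⟨0, hn0⟩⟩
  have hnorm : ∀ m : Fin n, Filter.Tendsto (fun t : ℝ =>
      ‖g - ∑ k ∈ Finset.range ((m : ℕ) + 1), (c' k / c' 0) • iteratedDeriv k x t‖)
      Filter.atTop (nhds 0) := by
    intro m
    simpa using (hym m).norm
  apply squeeze_zero (g := fun t : ℝ => ∑ m : Fin n,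
      ‖g - ∑ k ∈ Finset.range ((m : ℕ) + 1), (c' k / c' 0) • iteratedDeriv k x t‖)
  · intro t
    exact Real.iSup_nonneg fun m => norm_nonneg _
  · intro t
    refine ciSup_le fun m => ?_
    exact Finset.single_le_sum
      (f := fun i : Fin n => ‖g - ∑ k ∈ Finset.range ((i : ℕ) + 1),
        (c' k / c' 0) • iteratedDeriv k x t‖)
      (fun i _ => norm_nonneg _) (Finset.mem_univ m)
  · have := tendsto_finset_sum Finset.univ (fun m (_ : m ∈ Finset.univ) => hnorm m)
    simpa using this
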